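/- Let G be a connected k-regular finite simple graph on n vertices with k ≥ 1, whose distinct adjacency eigenvalues are k = θ_0 > θ_1 > ... > θ_d with d ≥ 2. Let θ_i be the largest eigenvalue among θ_0,...,θ_d such that θ_i ≤ −1 (such an i exists and satisfies i ≥ 1). Then eq_3(G) ≤ n · (θ_0 + θ_i θ_{i−1}) / ((θ_0 − θ_i)(θ_0 − θ_{i−1})). -/

import Mathlib

open SimpleGraph Matrix Finset

/-- `S` is a `t`-equidistant set of `G`: all distinct vertices of `S` are at distance
exactly `t` in `G`. -/
def IsEquidistantSet {V : Type*} (G : SimpleGraph V) (t : ℕ) (S : Finset V) : Prop :=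
  (S : Set V).Pairwise fun u v => G.dist u v = t

/-- The `t`-equidistant number of `G`: the maximum size of a `t`-equidistant set. -/
noncomputable def eqNum {V : Type*} [Fintype V] (G : SimpleGraph V) (t : ℕ) : ℕ :=
  sSup {n : ℕ | ∃ S : Finset V, IsEquidistantSet G t S ∧ S.card = n}

/-- `S` is a `t`-independent set of `G`: all distinct vertices of `S` are at pairwise
distance greater than `t` in `G`. -/
def IsTIndepSet {V : Type*} (G : SimpleGraph V) (t : ℕ) (S : Finset V) : Prop :=
  (S : Set V).Pairwise fun u v => t < G.dist u v

/-- The `t`-independence number of `G`. -/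
noncomputable def indepNumT {V : Type*} [Fintype V] (G : SimpleGraph V) (t : ℕ) : ℕ :=
  sSup {n : ℕ | ∃ S : Finset V, IsTIndepSet G t S ∧ S.card = n}

/-- The equidistant number of `G`: `max {eq_t(G) : 1 ≤ t ≤ diam G}`. -/
noncomputable def eqTotalNum {V : Type*} [Fintype V] (G : SimpleGraph V) : ℕ :=
  (Finset.Icc 1 G.diam).sup (eqNum G)

lemma eqNum_bdd {V : Type*} [Fintype V] (G : SimpleGraph V) (t : ℕ) :
    BddAbove {n : ℕ | ∃ S : Finset V, IsEquidistantSet G t S ∧ S.card = n} := by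
  refine ⟨Fintype.card V, fun m hm => ?_⟩
  obtain ⟨S, _, rfl⟩ := hm
  simpa using S.card_le_univ

lemma eqNum_exists {V : Type*} [Fintype V] (G : SimpleGraph V) (t : ℕ) :
    ∃ S : Finset V, IsEquidistantSet G t S ∧ S.card = eqNum G t := by
  have hne : {n : ℕ | ∃ S : Finset V, IsEquidistantSet G t S ∧ S.card = n}.Nonempty :=
    ⟨0, ∅, by simp [IsEquidistantSet], by simp⟩
  exact Nat.sSup_mem hne (eqNum_bdd G t)

lemma one_le_eqNum {V : Type*} [Fintype V] [Nonempty V] (G : SimpleGraph V) (t : ℕ) :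
    1 ≤ eqNum G t := by
  refine le_csSup (eqNum_bdd G t) ?_
  exact ⟨{Classical.arbitrary V}, by simp [IsEquidistantSet], by simp⟩

lemma diag_conj_trace {V : Type*} [Fintype V] [DecidableEq V] {A : Matrix V V ℝ} (hA : A.IsHermitian) (f : V → ℝ) :
    ((hA.eigenvectorUnitary : Matrix V V ℝ) * Matrix.diagonal f *
      star (hA.eigenvectorUnitary : Matrix V V ℝ)).trace = ∑ v, f v := by
  rw [Matrix.trace_mul_cycle, Matrix.UnitaryGroup.star_mul_self, one_mul, Matrix.trace_diagonal]

lemma spec_quad {V : Type*} [Fintype V] [DecidableEq V] {A : Matrix V V ℝ} (hA : A.IsHermitian) (c₁ c₀ : ℝ) :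
    A * A - c₁ • A + c₀ • 1 =
      (hA.eigenvectorUnitary : Matrix V V ℝ) *
        Matrix.diagonal (fun v => hA.eigenvalues v ^ 2 - c₁ * hA.eigenvalues v + c₀) *
        star (hA.eigenvectorUnitary : Matrix V V ℝ) := by
  have hsp := hA.spectral_theorem
  set U := (hA.eigenvectorUnitary : Matrix V V ℝ) with hU
  set W := star U with hW
  have hWU : W * U = 1 := Matrix.UnitaryGroup.star_mul_self _
  have hUW : U * W = 1 := by
    have := Matrix.mem_unitaryGroup_iff.mp (hA.eigenvectorUnitary).2
    simpa [hU, hW] using this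
  set D := Matrix.diagonal ((RCLike.ofReal : ℝ → ℝ) ∘ hA.eigenvalues) with hD
  have hsp' : A = U * D * W := hsp
  have h1 : (U * D * W) * (U * D * W) = U * (D * D) * W := by
    calc (U * D * W) * (U * D * W) = U * D * (W * U) * (D * W) := by noncomm_ring
      _ = U * (D * D) * W := by rw [hWU, Matrix.mul_one]; noncomm_ring
  have h2 : c₁ • (U * D * W) = U * (c₁ • D) * W := by
    rw [Matrix.mul_smul, Matrix.smul_mul]
  have h3 : (c₀ • (1 : Matrix V V ℝ)) = U * (c₀ • 1) * W := by
    rw [Matrix.mul_smul, Matrix.smul_mul, mul_one, hUW]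
  calc A * A - c₁ • A + c₀ • 1
      = (U * D * W) * (U * D * W) - c₁ • (U * D * W) + c₀ • 1 := by rw [← hsp']
    _ = U * (D * D) * W - U * (c₁ • D) * W + U * (c₀ • 1) * W := by rw [h1, h2, ← h3]
    _ = U * (D * D - c₁ • D + c₀ • 1) * W := by
        rw [← Matrix.sub_mul, ← Matrix.mul_sub, ← Matrix.add_mul, ← Matrix.mul_add]
  congr 1
  congr 1
  have : D = Matrix.diagonal hA.eigenvalues := by
    simp [hD, RCLike.ofReal_real_eq_id]
  rw [this, Matrix.diagonal_mul_diagonal]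
  ext u w
  rcases eq_or_ne u w with rfl | h
  · simp [Matrix.diagonal_apply, Matrix.one_apply]; ring
  · simp [Matrix.diagonal_apply, Matrix.one_apply, h]


set_option maxHeartbeats 2000000 in
/-- best Ratio-type bound for `t = 3`. Let `G` be a connected `k`-regular
graph, `k ≥ 1`, on `n` vertices with distinct adjacency eigenvalues
`k = θ_0 > θ_1 > ⋯ > θ_d`, `d ≥ 2`, and let `θ_i` be the largest eigenvalue with
`θ_i ≤ -1` (it satisfies `i ≥ 1`). Then
`eq_3(G) ≤ n (θ_0 + θ_i θ_{i-1}) / ((θ_0 - θ_i)(θ_0 - θ_{i-1}))`. -/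
theorem eqNum_three_le_ratio_bound {V : Type*} [Fintype V] [DecidableEq V]
    (G : SimpleGraph V) [DecidableRel G.Adj] (hG : G.Connected)
    (n : ℕ) (hn : Fintype.card V = n)
    (k : ℕ) (hk : 1 ≤ k) (hreg : G.IsRegularOfDegree k)
    (hA : (G.adjMatrix ℝ).IsHermitian)
    (d : ℕ) (hd : 2 ≤ d) (θ : ℕ → ℝ)
    (hθstrict : ∀ j l : ℕ, j < l → l ≤ d → θ l < θ j)
    (hθ0 : θ 0 = (k : ℝ))
    (hspec : {x : ℝ | ∃ j ≤ d, θ j = x} = Set.range hA.eigenvalues)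
    (i : ℕ) (hid : i ≤ d) (hi1 : 1 ≤ i)
    (hile : θ i ≤ -1)
    (himax : ∀ j ≤ d, θ j ≤ -1 → θ j ≤ θ i) :
    (eqNum G 3 : ℝ) ≤
      n * (θ 0 + θ i * θ (i - 1)) / ((θ 0 - θ i) * (θ 0 - θ (i - 1))) := by
  classical
  have hVne : Nonempty V := hG.nonempty
  subst hn
  set N : ℕ := Fintype.card V with hN
  have hN1 : 1 ≤ N := Fintype.card_pos
  have hθmono : ∀ j l : ℕ, j ≤ l → l ≤ d → θ l ≤ θ j := by
    intro j l hjl hld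
    rcases lt_or_eq_of_le hjl with h | rfl
    · exact (hθstrict j l h hld).le
    · exact le_rfl
  set A : Matrix V V ℝ := G.adjMatrix ℝ with hAdef
  set ev : V → ℝ := hA.eigenvalues with hev
  have hevmem : ∀ v : V, ∃ j ≤ d, θ j = ev v := by
    intro v
    have : ev v ∈ Set.range hA.eigenvalues := ⟨v, rfl⟩
    rw [← hspec] at this
    exact this
  -- trace identities
  have htr : ∑ v, ev v = 0 := by
    have h1 : A = (hA.eigenvectorUnitary : Matrix V V ℝ) *
        Matrix.diagonal ev * star (hA.eigenvectorUnitary : Matrix V V ℝ) := by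
      have h := hA.spectral_theorem
      rwa [show Matrix.diagonal ((RCLike.ofReal : ℝ → ℝ) ∘ hA.eigenvalues)
          = Matrix.diagonal ev by simp [RCLike.ofReal_real_eq_id, hev]] at h
    have h2 := diag_conj_trace hA ev
    rw [← h1] at h2
    rw [← h2]
    exact SimpleGraph.trace_adjMatrix ℝ (G := G)
  have htr2 : ∑ v, (ev v) ^ 2 = (N : ℝ) * k := by
    have h1 : A * A = (hA.eigenvectorUnitary : Matrix V V ℝ) *
        Matrix.diagonal (fun v => ev v ^ 2 - 0 * ev v + 0) *
        star (hA.eigenvectorUnitary : Matrix V V ℝ) := by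
      have := spec_quad hA 0 0
      simpa using this
    have h2 : (A * A).trace = ∑ v, (ev v) ^ 2 := by
      rw [h1, diag_conj_trace]
      simp
    have h3 : (A * A).trace = (N : ℝ) * k := by
      rw [Matrix.trace]
      have : ∀ v : V, (A * A).diag v = (k : ℝ) := by
        intro v
        have := G.adjMatrix_mul_self_apply_self (α := ℝ) v
        rw [Matrix.diag_apply, this, hreg v]
      rw [Finset.sum_congr rfl fun v _ => this v]
      simp [mul_comm, hN]
    rw [← h2, h3]
  -- θ (i-1) < θ 0
  have hblt : θ (i - 1) < θ 0 := by
    rcases lt_or_eq_of_le hi1 with h2 | h1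
    · exact hθstrict 0 (i-1) (by omega) (by omega)
    · -- i = 1 : contradiction via trace
      exfalso
      have hi1' : i = 1 := h1.symm
      have hterm : ∀ v : V, ((k : ℝ) - ev v) * (ev v + 1) ≤ 0 := by
        intro v
        obtain ⟨j, hjd, hjv⟩ := hevmem v
        rcases Nat.eq_zero_or_pos j with rfl | hj
        · rw [← hjv, hθ0]; simp
        · have : θ j ≤ θ i := by
            rw [hi1']; exact hθmono 1 j hj hjd
          have h4 : ev v ≤ -1 := by rw [← hjv]; exact this.trans hile
          have h5 : (0:ℝ) ≤ (k:ℝ) - ev v := by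
            have : (0:ℝ) ≤ (k:ℝ) := Nat.cast_nonneg k
            linarith
          nlinarith
      have hsum0 : ∑ v, ((k : ℝ) - ev v) * (ev v + 1) = 0 := by
        have : ∀ v : V, ((k : ℝ) - ev v) * (ev v + 1)
            = ((k:ℝ) - 1) * ev v + (k:ℝ) - (ev v)^2 := by intro v; ring
        rw [Finset.sum_congr rfl fun v _ => this v]
        simp only [Finset.sum_add_distrib, Finset.sum_sub_distrib, ← Finset.mul_sum, htr, htr2]
        simp [hN]
      obtain ⟨v0, hv0⟩ : ∃ v0 : V, ev v0 = θ 2 := by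
        have : θ 2 ∈ {x : ℝ | ∃ j ≤ d, θ j = x} := ⟨2, hd, rfl⟩
        rw [hspec] at this
        obtain ⟨v0, hv0⟩ := this
        exact ⟨v0, hv0⟩
      have hv0lt : ((k : ℝ) - ev v0) * (ev v0 + 1) < 0 := by
        have h21 : θ 2 < θ 1 := hθstrict 1 2 one_lt_two hd
        have h2k : θ 2 < (k:ℝ) := by
          rw [← hθ0]; exact hθstrict 0 2 two_pos hd
        have : θ 1 ≤ -1 := by rw [← hi1']; exact hile
        rw [hv0]
        nlinarith
      have : ∑ v, ((k : ℝ) - ev v) * (ev v + 1) < 0 := by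
        calc ∑ v, ((k : ℝ) - ev v) * (ev v + 1)
            < ∑ _v : V, (0:ℝ) := by
              refine Finset.sum_lt_sum (fun v _ => hterm v) ⟨v0, Finset.mem_univ v0, hv0lt⟩
          _ = 0 := by simp
      linarith [hsum0]
  -- main argument
  have hab : θ i < θ (i - 1) := hθstrict (i-1) i (by omega) hid
  have hak : θ i < θ 0 := lt_trans hab hblt
  set p : ℝ := (θ 0 - θ i) * (θ 0 - θ (i - 1)) with hpdef
  have hp : 0 < p := mul_pos (by linarith) (by linarith)
  set M : Matrix V V ℝ := A * A - (θ i + θ (i - 1)) • A + (θ i * θ (i - 1)) • 1 with hMdef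
  have hMdiag : M = (hA.eigenvectorUnitary : Matrix V V ℝ) *
      Matrix.diagonal (fun v => ev v ^ 2 - (θ i + θ (i - 1)) * ev v + θ i * θ (i - 1)) *
      star (hA.eigenvectorUnitary : Matrix V V ℝ) := by
    rw [hMdef]; exact spec_quad hA _ _
  have hgnn : ∀ v, 0 ≤ ev v ^ 2 - (θ i + θ (i - 1)) * ev v + θ i * θ (i - 1) := by
    intro v
    obtain ⟨j, hjd, hjv⟩ := hevmem v
    rcases le_or_gt j (i-1) with hj | hj
    · have h1 : θ (i-1) ≤ θ j := hθmono j (i-1) hj (by omega)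
      rw [← hjv]; nlinarith
    · have h1 : θ j ≤ θ i := hθmono i j (by omega) hjd
      rw [← hjv]; nlinarith
  have hMpsd : M.PosSemidef := by
    rw [hMdiag, Matrix.star_eq_conjTranspose]
    refine Matrix.PosSemidef.mul_mul_conjTranspose_same ?_ _
    exact Matrix.PosSemidef.diagonal (by intro v; exact hgnn v)
  obtain ⟨S, hS, hScard⟩ := eqNum_exists G 3
  have hs1n : 1 ≤ eqNum G 3 := one_le_eqNum G 3
  set s : ℝ := (eqNum G 3 : ℝ) with hsdef
  have hs1 : (1:ℝ) ≤ s := by rw [hsdef]; exact_mod_cast hs1n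
  have hsS : (S.card : ℝ) = s := by exact_mod_cast congrArg _ hScard
  set χ : V → ℝ := fun v => if v ∈ S then 1 else 0 with hχ
  set o1 : V → ℝ := fun _ => 1 with ho1
  have hdist : ∀ u v, u ∈ S → v ∈ S → u ≠ v → G.dist u v = 3 := by
    intro u v hu hv hne
    exact hS (Finset.mem_coe.mpr hu) (Finset.mem_coe.mpr hv) hne
  have hnadj : ∀ u v, u ∈ S → v ∈ S → ¬ G.Adj u v := by
    intro u v hu hv hadj
    have hne := G.ne_of_adj hadj
    have h1 : G.dist u v = 1 := SimpleGraph.dist_eq_one_iff_adj.mpr hadj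
    have h3 := hdist u v hu hv hne
    omega
  have hno2 : ∀ u w v, u ∈ S → v ∈ S → G.Adj u w → G.Adj w v → u = v := by
    intro u w v hu hv h1 h2
    by_contra hne
    have h3 := hdist u v hu hv hne
    have t := hG.dist_triangle (u := u) (v := w) (w := v)
    have d1 : G.dist u w = 1 := SimpleGraph.dist_eq_one_iff_adj.mpr h1
    have d2 : G.dist w v = 1 := SimpleGraph.dist_eq_one_iff_adj.mpr h2
    omega
  have hchisum : ∑ v, χ v = s := by
    rw [← hsS]
    simp only [hχ]
    rw [Finset.sum_ite_mem, Finset.univ_inter, Finset.sum_const, nsmul_eq_mul, mul_one]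
  have hchichi : χ ⬝ᵥ χ = s := by
    rw [dotProduct, ← hchisum]
    refine Finset.sum_congr rfl fun v _ => ?_
    by_cases hv : v ∈ S <;> simp [hχ, hv]
  have hchio : χ ⬝ᵥ o1 = s := by
    rw [dotProduct, ← hchisum]
    simp [ho1]
  have hoo : o1 ⬝ᵥ o1 = (N : ℝ) := by
    simp [dotProduct, ho1, hN]
  have hsum1 : χ ⬝ᵥ (A *ᵥ χ) = 0 := by
    rw [dotProduct]
    refine Finset.sum_eq_zero fun v _ => ?_
    by_cases hv : v ∈ S
    · have hz : (G.adjMatrix ℝ *ᵥ χ) v = 0 := by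
        rw [SimpleGraph.adjMatrix_mulVec_apply]
        refine Finset.sum_eq_zero fun u hu => ?_
        rw [SimpleGraph.mem_neighborFinset] at hu
        have : u ∉ S := fun huS => hnadj v u hv huS hu
        simp [hχ, this]
      rw [show A = G.adjMatrix ℝ from rfl, hz, mul_zero]
    · simp [hχ, hv]
  have hsum2 : χ ⬝ᵥ ((A * A) *ᵥ χ) = s * k := by
    rw [← Matrix.mulVec_mulVec, dotProduct]
    have hval : ∀ v ∈ S, (A *ᵥ (A *ᵥ χ)) v = (k : ℝ) := by
      intro v hv
      rw [show A = G.adjMatrix ℝ from rfl, SimpleGraph.adjMatrix_mulVec_apply]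
      have hone : ∀ u ∈ G.neighborFinset v, (G.adjMatrix ℝ *ᵥ χ) u = 1 := by
        intro u hu
        rw [SimpleGraph.mem_neighborFinset] at hu
        rw [SimpleGraph.adjMatrix_mulVec_apply]
        have hvmem : v ∈ G.neighborFinset u := by
          rw [SimpleGraph.mem_neighborFinset]; exact hu.symm
        rw [Finset.sum_eq_single_of_mem v hvmem]
        · simp [hχ, hv]
        · intro w hw hne
          rw [SimpleGraph.mem_neighborFinset] at hw
          have : w ∉ S := fun hwS => hne (hno2 w u v hwS hv hw.symm hu.symm)
          simp [hχ, this]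
      rw [Finset.sum_congr rfl hone]
      simp [hreg v]
    calc ∑ v, χ v * (A *ᵥ (A *ᵥ χ)) v
        = ∑ v, (if v ∈ S then (A *ᵥ (A *ᵥ χ)) v else 0) := by
          refine Finset.sum_congr rfl fun v _ => ?_
          by_cases hv : v ∈ S <;> simp [hχ, hv]
      _ = ∑ v ∈ S, (A *ᵥ (A *ᵥ χ)) v := by
          rw [Finset.sum_ite_mem, Finset.univ_inter]
      _ = ∑ _v ∈ S, (k : ℝ) := Finset.sum_congr rfl hval
      _ = s * k := by rw [Finset.sum_const, ← hsS]; simp [mul_comm]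
  have hMchichi : χ ⬝ᵥ (M *ᵥ χ) = s * ((k : ℝ) + θ i * θ (i - 1)) := by
    rw [hMdef, Matrix.add_mulVec, Matrix.sub_mulVec, Matrix.smul_mulVec,
      Matrix.smul_mulVec, Matrix.one_mulVec, dotProduct_add,
      dotProduct_sub, dotProduct_smul, dotProduct_smul,
      hsum1, hsum2, hchichi]
    simp only [smul_eq_mul]
    ring
  set c : ℝ := (k : ℝ)^2 - (θ i + θ (i - 1)) * k + θ i * θ (i - 1) with hcdef
  have hAone : A *ᵥ o1 = fun _ => (k : ℝ) := by
    ext v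
    rw [show A = G.adjMatrix ℝ from rfl, SimpleGraph.adjMatrix_mulVec_apply]
    simp only [ho1]
    rw [Finset.sum_const]
    simp [hreg v]
  have hMone : M *ᵥ o1 = fun _ => c := by
    rw [hMdef, Matrix.add_mulVec, Matrix.sub_mulVec, Matrix.smul_mulVec,
      Matrix.smul_mulVec, Matrix.one_mulVec, ← Matrix.mulVec_mulVec, hAone]
    ext v
    have : (A *ᵥ fun _ => (k:ℝ)) v = (k:ℝ) * k := by
      rw [show A = G.adjMatrix ℝ from rfl, SimpleGraph.adjMatrix_mulVec_apply]
      rw [Finset.sum_const]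
      simp [hreg v]
    simp only [Pi.add_apply, Pi.sub_apply, Pi.smul_apply, this, smul_eq_mul, hcdef, ho1]
    ring
  have hAT : Aᵀ = A := by rw [hAdef]; exact SimpleGraph.transpose_adjMatrix G
  have hMT : Mᵀ = M := by
    rw [hMdef]
    simp only [Matrix.transpose_add, Matrix.transpose_sub, Matrix.transpose_smul,
      Matrix.transpose_mul, Matrix.transpose_one, hAT]
  have hchiMone : χ ⬝ᵥ (M *ᵥ o1) = c * s := by
    rw [hMone, dotProduct]
    calc ∑ v, χ v * c = (∑ v, χ v) * c := by rw [Finset.sum_mul]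
      _ = c * s := by rw [hchisum]; ring
  have honeMchi : o1 ⬝ᵥ (M *ᵥ χ) = c * s := by
    rw [Matrix.dotProduct_mulVec, ← Matrix.mulVec_transpose, hMT, hMone, dotProduct]
    calc ∑ v, c * χ v = c * ∑ v, χ v := by rw [Finset.mul_sum]
      _ = c * s := by rw [hchisum]
  have honeMone : o1 ⬝ᵥ (M *ᵥ o1) = c * N := by
    rw [hMone, dotProduct]
    simp [ho1, hN, mul_comm]
  -- the ratio bound
  set q : ℝ := s / N with hq
  set z : V → ℝ := χ - q • o1 with hz
  have h0 : 0 ≤ z ⬝ᵥ (M *ᵥ z) := by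
    have := hMpsd.dotProduct_mulVec_nonneg z
    simpa [star_trivial] using this
  have hexp : z ⬝ᵥ (M *ᵥ z) = s * ((k:ℝ) + θ i * θ (i-1)) - 2 * q * (c * s) + q^2 * (c * N) := by
    simp only [hz, Matrix.mulVec_sub, Matrix.mulVec_smul, sub_dotProduct,
      dotProduct_sub, smul_dotProduct, dotProduct_smul, smul_eq_mul]
    rw [hMchichi, hchiMone, honeMchi, honeMone]
    ring
  have hNpos : (0:ℝ) < N := by exact_mod_cast hN1
  have hcp : c = p := by rw [hcdef, hpdef, hθ0]; ring
  have hkey : s * p ≤ N * ((k:ℝ) + θ i * θ (i-1)) := by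
    rw [hexp, hq, hcp] at h0
    have hNne : (N:ℝ) ≠ 0 := hNpos.ne'
    have h2 : s * ((k:ℝ) + θ i * θ (i-1)) - 2 * (s / N) * (p * s) + (s / N)^2 * (p * N)
        = s * ((k:ℝ) + θ i * θ (i-1)) - s^2 * p / N := by
      field_simp
      ring
    rw [h2] at h0
    have h3 : s^2 * p / N ≤ s * ((k:ℝ) + θ i * θ (i-1)) := by linarith
    have h4 : s^2 * p ≤ N * (s * ((k:ℝ) + θ i * θ (i-1))) := by
      rw [div_le_iff₀ hNpos] at h3; linarith
    nlinarith [hp, hs1]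
  rw [le_div_iff₀ hp, hθ0]
  exact hkey
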